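/- Let k ≥ 1, n : Fin k → ℕ with n_i ≥ 1, and let ε be an allowable smoothing with conventions ε_0 = ε_{k+1} = 0. Let [m_1,...,m_j] be the sequence generated from [n] by ε per Definition 2.1. Then ∏_{t=1}^{j} (|m_t| - 1) = ∏_{i=1}^{k} δ_i, where δ_i = n_i - 1 + ε_{i-1} + ε_{i+1} if ε_i = 0 and δ_i = 1 if ε_i = 1. -/

import Mathlib

/-- The sign adjustment ∏_{j < i, ε_j = 1} (-1)^{n_j} from step 3 of Definition 2.1. -/
def cfSign (n ε : ℕ → ℕ) (i : ℕ) : ℤ :=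
  ∏ j ∈ (Finset.Ico 1 i).filter (fun j => ε j = 1), (-1 : ℤ) ^ (n j)

/-- The block of terms replacing n_i in Definition 2.1: if ε_i = 1, an alternating
sequence -2, 2, -2, ..., ±2 of length n_i - 1; if ε_i = 0, the single term
n_i + ε_{i-1} + ε_{i+1}; all terms multiplied by the sign adjustment. -/
def cfBlock (n ε : ℕ → ℕ) (i : ℕ) : List ℤ :=
  if ε i = 1 then
    (List.range (n i - 1)).map (fun t => cfSign n ε i * (-1) ^ (t + 1) * 2)
  else
    [cfSign n ε i * ((n i : ℤ) + (ε (i - 1) : ℤ) + (ε (i + 1) : ℤ))]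

/-- The continued fraction expansion generated from [n_1,...,n_k] by the smoothing ε
(Definition 2.1), with indices 1,...,k. -/
def cfGen (k : ℕ) (n ε : ℕ → ℕ) : List ℤ :=
  (List.range k).flatMap (fun i => cfBlock n ε (i + 1))

lemma abs_cfSign (n ε : ℕ → ℕ) (i : ℕ) : |cfSign n ε i| = 1 := by
  unfold cfSign
  rw [Finset.abs_prod]
  apply Finset.prod_eq_one
  intro j _
  simp [abs_pow]

lemma block_prod (n ε : ℕ → ℕ) (i : ℕ) (hn : 1 ≤ n i) :
    ((cfBlock n ε i).map (fun m => |m| - 1)).prod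
      = (if ε i = 1 then 1
         else (n i : ℤ) - 1 + (ε (i - 1) : ℤ) + (ε (i + 1) : ℤ)) := by
  unfold cfBlock
  by_cases h : ε i = 1
  · simp only [h, if_true, List.map_map]
    apply List.prod_eq_one
    intro x hx
    simp only [List.mem_map] at hx
    obtain ⟨t, _, rfl⟩ := hx
    simp [abs_mul, abs_cfSign, abs_pow]
  · simp only [h, if_false, List.map_cons, List.map_nil, List.prod_cons, List.prod_nil,
      mul_one, abs_mul, abs_cfSign, one_mul]
    rw [abs_of_nonneg (by positivity)]
    ring
/-- ∏_t (|m_t| - 1) over the generated sequence equals ∏_i δ_i, where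
δ_i = n_i - 1 + ε_{i-1} + ε_{i+1} if ε_i = 0 and δ_i = 1 if ε_i = 1. -/
theorem stmt_6 (k : ℕ) (hk : 1 ≤ k) (n : ℕ → ℕ) (ε : ℕ → ℕ)
    (hn : ∀ i, 1 ≤ i → i ≤ k → 1 ≤ n i)
    (hε01 : ∀ i, ε i = 0 ∨ ε i = 1)
    (hε0 : ε 0 = 0) (hεtop : ε (k + 1) = 0)
    (h1 : ∀ i, 1 ≤ i → i ≤ k → ε i = 1 → ε (i - 1) = 0 ∧ ε (i + 1) = 0)
    (h2 : ∀ i, 1 ≤ i → i ≤ k → n i = 1 → ε i = 0 → ε (i - 1) = 1 ∨ ε (i + 1) = 1) :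
    ((cfGen k n ε).map (fun m => |m| - 1)).prod
      = ∏ i ∈ Finset.Icc 1 k,
          (if ε i = 1 then 1
           else (n i : ℤ) - 1 + (ε (i - 1) : ℤ) + (ε (i + 1) : ℤ)) := by
  have key : ∀ L : List ℕ, (((L.flatMap (fun i => cfBlock n ε (i + 1))).map
      (fun m => |m| - 1)).prod)
      = (L.map (fun i => ((cfBlock n ε (i+1)).map (fun m => |m| - 1)).prod)).prod := by
    intro L
    induction L with
    | nil => simp
    | cons a L ih => simp [List.flatMap_cons, ih]
  unfold cfGen
  rw [key]
  have : (Finset.Icc 1 k) = (Finset.range k).image (· + 1) := by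
    ext x
    simp only [Finset.mem_Icc, Finset.mem_image, Finset.mem_range]
    constructor
    · rintro ⟨h1x, h2x⟩; exact ⟨x - 1, by omega, by omega⟩
    · rintro ⟨y, hy, rfl⟩; omega
  rw [this, Finset.prod_image (by intro a _ b _ h; simp only at h; omega)]
  have conv : ∀ (f : ℕ → ℤ) (m : ℕ), ((List.range m).map f).prod = ∏ i ∈ Finset.range m, f i := by
    intro f m
    induction m with
    | zero => simp
    | succ m ih => rw [List.range_succ, Finset.prod_range_succ, List.map_append, List.prod_append, ih]; simp
  rw [conv]
  apply Finset.prod_congr rfl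
  intro x hx
  rw [block_prod n ε (x+1) (hn (x+1) (by omega) (by simpa using Finset.mem_range.mp hx))]
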